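/- Let D be a complex inner product space and let h, e₊, e₋ : D → D be linear maps such that: (a) D is spanned by eigenvectors of h, and every eigenvalue of h is a nonnegative real number; (b) ⟨e₊ u, v⟩ = ⟨u, e₋ v⟩ for all u, v ∈ D; (c) ⁅h, e₊⁆ = e₊, ⁅h, e₋⁆ = −e₋ and ⁅e₋, e₊⁆ = 2·h. Then ‖e₋ Ψ‖ ≤ ‖h Ψ‖ and ‖e₊ Ψ‖ ≤ ‖Ψ + h Ψ‖ for every Ψ ∈ D. Moreover, for every linear combination q = a·h + b·e₊ + c·e₋ with a, b, c ∈ ℂ there exists t > 0 such that ∑_{n=0}^∞ tⁿ·‖qⁿ Ψ‖/n! < ∞ for every Ψ ∈ D. -/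

import Mathlib

open Finset

namespace SL2Aux

variable {D : Type*} [NormedAddCommGroup D] [InnerProductSpace ℂ D]

lemma comm_ep (h ep : Module.End ℂ D) (hc1 : ⁅h, ep⁆ = ep) (w : D) :
    h (ep w) = ep (h w) + ep w := by
  have := DFunLike.congr_fun hc1 w
  simp only [Ring.lie_def, LinearMap.sub_apply, Module.End.mul_apply] at this
  rw [sub_eq_iff_eq_add] at this
  rw [this]; abel

lemma comm_em (h em : Module.End ℂ D) (hc2 : ⁅h, em⁆ = -em) (w : D) :
    h (em w) = em (h w) - em w := by
  have := DFunLike.congr_fun hc2 w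
  simp only [Ring.lie_def, LinearMap.sub_apply, LinearMap.neg_apply, Module.End.mul_apply] at this
  rw [sub_eq_iff_eq_add] at this
  rw [this]; abel

lemma comm_emep (h ep em : Module.End ℂ D) (hc3 : ⁅em, ep⁆ = (2 : ℂ) • h) (w : D) :
    em (ep w) = ep (em w) + (2:ℂ) • h w := by
  have := DFunLike.congr_fun hc3 w
  simp only [Ring.lie_def, LinearMap.sub_apply, LinearMap.smul_apply, Module.End.mul_apply] at this
  rw [sub_eq_iff_eq_add] at this
  rw [this]; abel

lemma eig_ep (h ep : Module.End ℂ D) (hc1 : ⁅h, ep⁆ = ep) {c : ℝ} {v : D}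
    (hv : h v = (c:ℂ) • v) : h (ep v) = ((c + 1 : ℝ):ℂ) • ep v := by
  rw [comm_ep h ep hc1, hv, map_smul]
  push_cast
  rw [add_smul, one_smul]

lemma eig_em (h em : Module.End ℂ D) (hc2 : ⁅h, em⁆ = -em) {c : ℝ} {v : D}
    (hv : h v = (c:ℂ) • v) : h (em v) = ((c - 1 : ℝ):ℂ) • em v := by
  rw [comm_em h em hc2, hv, map_smul]
  push_cast
  rw [sub_smul, one_smul]

lemma hadj' (ep em : Module.End ℂ D)
    (hadj : ∀ u v : D, (inner ℂ (ep u) v : ℂ) = inner ℂ u (em v)) (u v : D) :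
    (inner ℂ (em u) v : ℂ) = inner ℂ u (ep v) := by
  rw [← inner_conj_symm, ← hadj, inner_conj_symm]

lemma hsym (h ep em : Module.End ℂ D)
    (hadj : ∀ u v : D, (inner ℂ (ep u) v : ℂ) = inner ℂ u (em v))
    (hc3 : ⁅em, ep⁆ = (2 : ℂ) • h) (u v : D) :
    (inner ℂ (h u) v : ℂ) = inner ℂ u (h v) := by
  have key : ∀ w z : D, (inner ℂ (em (ep w) - ep (em w)) z : ℂ)
      = inner ℂ w (em (ep z) - ep (em z)) := by
    intro w z
    rw [inner_sub_left, inner_sub_right, hadj' ep em hadj (ep w) z, hadj (em w) z,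
      ← hadj w (ep z), ← hadj' ep em hadj w (em z)]
  have hw : ∀ w : D, em (ep w) - ep (em w) = (2:ℂ) • h w := by
    intro w
    have := DFunLike.congr_fun hc3 w
    simpa only [Ring.lie_def, LinearMap.sub_apply, LinearMap.smul_apply,
      Module.End.mul_apply] using this
  have key2 := key u v
  rw [hw, hw, inner_smul_left, inner_smul_right] at key2
  have h2 : (starRingEnd ℂ) (2:ℂ) = 2 := Complex.conj_ofNat 2
  rw [h2] at key2
  exact mul_left_cancel₀ two_ne_zero key2

lemma orth (h ep em : Module.End ℂ D)
    (hadj : ∀ u v : D, (inner ℂ (ep u) v : ℂ) = inner ℂ u (em v))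
    (hc3 : ⁅em, ep⁆ = (2 : ℂ) • h) {c d : ℝ} {u v : D}
    (hu : h u = (c:ℂ) • u) (hv : h v = (d:ℂ) • v) (hcd : c ≠ d) :
    (inner ℂ u v : ℂ) = 0 := by
  have key := hsym h ep em hadj hc3 u v
  rw [hu, hv, inner_smul_left, inner_smul_right, Complex.conj_ofReal] at key
  have h2 : ((c:ℂ) - d) * inner ℂ u v = 0 := by rw [sub_mul, key, sub_self]
  rcases mul_eq_zero.1 h2 with h3 | h3
  · exact absurd (by exact_mod_cast sub_eq_zero.1 h3) hcd
  · exact h3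

lemma le_of_sq_le_sq {x y : ℝ} (hx : 0 ≤ x) (hy : 0 ≤ y) (hxy : x^2 ≤ y^2) : x ≤ y := by
  rw [← Real.sqrt_sq hx, ← Real.sqrt_sq hy]
  exact Real.sqrt_le_sqrt hxy

lemma normsq_sum (h ep em : Module.End ℂ D)
    (hadj : ∀ u v : D, (inner ℂ (ep u) v : ℂ) = inner ℂ u (em v))
    (hc3 : ⁅em, ep⁆ = (2 : ℂ) • h)
    (s : Finset ℝ) (g : ℝ → D) (e : ℝ → ℝ) (hinj : Set.InjOn e s)
    (hg : ∀ c ∈ s, h (g c) = ((e c : ℝ) : ℂ) • g c) :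
    ‖∑ c ∈ s, g c‖^2 = ∑ c ∈ s, ‖g c‖^2 := by
  have key : (inner ℂ (∑ c ∈ s, g c) (∑ c ∈ s, g c) : ℂ) = ∑ c ∈ s, inner ℂ (g c) (g c) := by
    rw [sum_inner]
    refine Finset.sum_congr rfl fun c hc => ?_
    rw [inner_sum]
    refine Finset.sum_eq_single_of_mem c hc fun d hd hdc => ?_
    exact orth h ep em hadj hc3 (hg c hc) (hg d hd)
      (fun hecd => hdc (hinj hd hc hecd.symm))
  calc ‖∑ c ∈ s, g c‖^2
      = RCLike.re (inner ℂ (∑ c ∈ s, g c) (∑ c ∈ s, g c) : ℂ) :=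
        (inner_self_eq_norm_sq _).symm
    _ = ∑ c ∈ s, RCLike.re (inner ℂ (g c) (g c) : ℂ) := by rw [key, map_sum]
    _ = ∑ c ∈ s, ‖g c‖^2 := Finset.sum_congr rfl fun c _ => inner_self_eq_norm_sq _


section core
variable (h ep em : Module.End ℂ D)
variable (heig : ∀ μ : ℂ, Module.End.HasEigenvalue h μ → ∃ c : ℝ, 0 ≤ c ∧ μ = (c : ℂ))
variable (hadj : ∀ u v : D, (inner ℂ (ep u) v : ℂ) = inner ℂ u (em v))
variable (hc1 : ⁅h, ep⁆ = ep) (hc2 : ⁅h, em⁆ = -em) (hc3 : ⁅em, ep⁆ = (2 : ℂ) • h)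

include heig in
lemma eig_nonneg {c : ℝ} {v : D} (hv : h v = (c:ℂ) • v) (hv0 : v ≠ 0) : 0 ≤ c := by
  have hev : Module.End.HasEigenvalue h (c:ℂ) :=
    Module.End.hasEigenvalue_of_hasEigenvector ⟨Module.End.mem_eigenspace_iff.2 hv, hv0⟩
  obtain ⟨c', hc', hcc⟩ := heig _ hev
  rwa [show c = c' from by exact_mod_cast hcc]

include hadj in
lemma innerC (v : D) : (inner ℂ (ep (em v)) v : ℂ) = ((‖em v‖^2 : ℝ) : ℂ) := by
  rw [hadj, inner_self_eq_norm_sq_to_K]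
  norm_cast

include hadj hc3 in
lemma lemD {c : ℝ} {v : D} (hv : h v = (c:ℂ) • v) :
    ‖ep v‖^2 = ‖em v‖^2 + 2*c*‖v‖^2 := by
  have h1 : ((‖ep v‖^2 : ℝ):ℂ) = inner ℂ v (em (ep v)) := by
    rw [← hadj, inner_self_eq_norm_sq_to_K]; norm_cast
  have hvv : (inner ℂ v v : ℂ) = ((‖v‖^2 : ℝ):ℂ) := by
    rw [inner_self_eq_norm_sq_to_K]; norm_cast
  rw [comm_emep h ep em hc3, inner_add_right, inner_smul_right, hv, inner_smul_right,
    hvv] at h1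
  have h2 : (inner ℂ v (ep (em v)) : ℂ) = ((‖em v‖^2 : ℝ):ℂ) := by
    rw [← inner_conj_symm, innerC ep em hadj, Complex.conj_ofReal]
  rw [h2] at h1
  have h3 : ((‖ep v‖^2 : ℝ):ℂ) = (((‖em v‖^2 + 2*c*‖v‖^2 : ℝ)):ℂ) := by
    rw [h1]; push_cast; ring
  exact_mod_cast h3

include heig hadj hc2 hc3 in
lemma lemE : ∀ n : ℕ, ∀ c : ℝ, ∀ v : D, h v = (c:ℂ) • v → c < n → ‖em v‖ ≤ c * ‖v‖ := by
  intro n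
  induction n with
  | zero =>
    intro c v hv hc
    rcases eq_or_ne v 0 with rfl | hv0
    · simp
    · exact absurd (eig_nonneg h heig hv hv0) (by push_cast at hc; linarith)
  | succ n ih =>
    intro c v hv hc
    rcases eq_or_ne v 0 with rfl | hv0
    · simp
    have hc0 : 0 ≤ c := eig_nonneg h heig hv hv0
    have hem : h (em v) = ((c-1:ℝ):ℂ) • em v := eig_em h em hc2 hv
    rcases eq_or_ne (em v) 0 with h0 | hne0
    · rw [h0, norm_zero]; positivity
    have hc1' : 0 ≤ c - 1 := eig_nonneg h heig hem hne0
    have hIH : ‖em (em v)‖ ≤ (c-1) * ‖em v‖ := by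
      refine ih (c-1) (em v) hem ?_
      push_cast at hc ⊢; linarith
    have hD : ‖ep (em v)‖^2 = ‖em (em v)‖^2 + 2*(c-1)*‖em v‖^2 :=
      lemD h ep em hadj hc3 hem
    have hCS : ‖em v‖^2 ≤ ‖ep (em v)‖ * ‖v‖ := by
      have h1 := innerC ep em hadj (v := v)
      calc ‖em v‖^2 = ‖(inner ℂ (ep (em v)) v : ℂ)‖ := by
            rw [h1, Complex.norm_real, Real.norm_eq_abs, abs_of_nonneg (by positivity)]
        _ ≤ ‖ep (em v)‖ * ‖v‖ := norm_inner_le_norm _ _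
    have hepb : ‖ep (em v)‖ ≤ c * ‖em v‖ := by
      refine le_of_sq_le_sq (norm_nonneg _) (by positivity) ?_
      have : (c * ‖em v‖)^2 = c^2 * ‖em v‖^2 := by ring
      rw [this, hD]
      nlinarith [norm_nonneg (em (em v)), norm_nonneg (em v), sq_nonneg (‖em v‖)]
    have hpos : 0 < ‖em v‖ := norm_pos_iff.2 hne0
    nlinarith [norm_nonneg v, mul_le_mul_of_nonneg_right hepb (norm_nonneg v)]

include heig hadj hc2 hc3 in
lemma lemEm {c : ℝ} {v : D} (hv : h v = (c:ℂ) • v) : ‖em v‖ ≤ c * ‖v‖ := by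
  refine lemE h ep em heig hadj hc2 hc3 (⌈c⌉₊ + 1) c v hv ?_
  push_cast
  have := Nat.le_ceil c
  linarith

include heig hadj hc1 hc2 hc3 in
lemma lemEp {c : ℝ} {v : D} (hv : h v = (c:ℂ) • v) : ‖ep v‖ ≤ (1 + c) * ‖v‖ := by
  rcases eq_or_ne v 0 with rfl | hv0
  · simp
  have hc0 : 0 ≤ c := eig_nonneg h heig hv hv0
  have hD : ‖ep v‖^2 = ‖em v‖^2 + 2*c*‖v‖^2 := lemD h ep em hadj hc3 hv
  have hm : ‖em v‖ ≤ c * ‖v‖ := lemEm h ep em heig hadj hc2 hc3 hv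
  refine le_of_sq_le_sq (norm_nonneg _) (by positivity) ?_
  nlinarith [norm_nonneg (em v), norm_nonneg v]

end core

section decomp
variable (h ep em : Module.End ℂ D)
variable (heig : ∀ μ : ℂ, Module.End.HasEigenvalue h μ → ∃ c : ℝ, 0 ≤ c ∧ μ = (c : ℂ))
variable (hadj : ∀ u v : D, (inner ℂ (ep u) v : ℂ) = inner ℂ u (em v))
variable (hc1 : ⁅h, ep⁆ = ep) (hc2 : ⁅h, em⁆ = -em) (hc3 : ⁅em, ep⁆ = (2 : ℂ) • h)

include heig in
lemma rep_top (hspan : Submodule.span ℂ {v : D | ∃ μ : ℂ, h v = μ • v} = ⊤) (Ψ : D) :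
    ∃ (s : Finset ℝ) (g : ℝ → D),
      (∀ c ∈ s, h (g c) = (c:ℂ) • g c ∧ (g c ≠ 0 → 0 ≤ c)) ∧ Ψ = ∑ c ∈ s, g c := by
  classical
  have hmem : Ψ ∈ Submodule.span ℂ {v : D | ∃ μ : ℂ, h v = μ • v} := by
    rw [hspan]; trivial
  refine Submodule.span_induction (p := fun v _ => ∃ (s : Finset ℝ) (g : ℝ → D),
      (∀ c ∈ s, h (g c) = (c:ℂ) • g c ∧ (g c ≠ 0 → 0 ≤ c)) ∧ v = ∑ c ∈ s, g c)
    ?_ ?_ ?_ ?_ hmem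
  · rintro x ⟨μ, hμ⟩
    rcases eq_or_ne x 0 with rfl | hx0
    · exact ⟨∅, fun _ => 0, by simp, by simp⟩
    obtain ⟨c, hc0, rfl⟩ := heig μ
      (Module.End.hasEigenvalue_of_hasEigenvector ⟨Module.End.mem_eigenspace_iff.2 hμ, hx0⟩)
    exact ⟨{c}, fun _ => x, fun d hd => by
      rw [Finset.mem_singleton] at hd; subst hd; exact ⟨hμ, fun _ => hc0⟩,
      by simp⟩
  · exact ⟨∅, fun _ => 0, by simp, by simp⟩
  · rintro x y hxm hym ⟨s, g, hg, rfl⟩ ⟨s', g', hg', rfl⟩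
    refine ⟨s ∪ s', fun c => (if c ∈ s then g c else 0) + (if c ∈ s' then g' c else 0),
      fun c hc => ⟨?_, ?_⟩, ?_⟩
    · have e1 : h (if c ∈ s then g c else 0) = (c:ℂ) • (if c ∈ s then g c else 0) := by
        split_ifs with h1
        · exact (hg c h1).1
        · simp
      have e2 : h (if c ∈ s' then g' c else 0) = (c:ℂ) • (if c ∈ s' then g' c else 0) := by
        split_ifs with h2
        · exact (hg' c h2).1
        · simp
      rw [map_add, e1, e2, smul_add]
    · intro hne
      by_contra hcneg
      apply hne
      have z1 : (if c ∈ s then g c else 0) = 0 := by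
        split_ifs with h1
        · by_contra hgz
          exact hcneg ((hg c h1).2 hgz)
        · rfl
      have z2 : (if c ∈ s' then g' c else 0) = 0 := by
        split_ifs with h2
        · by_contra hgz
          exact hcneg ((hg' c h2).2 hgz)
        · rfl
      show (if c ∈ s then g c else 0) + (if c ∈ s' then g' c else 0) = 0
      rw [z1, z2, add_zero]
    · rw [Finset.sum_add_distrib, Finset.sum_ite_mem, Finset.sum_ite_mem,
        Finset.union_inter_cancel_left, Finset.union_inter_cancel_right]
  · rintro a x hxm ⟨s, g, hg, rfl⟩
    refine ⟨s, fun c => a • g c, fun c hc => ⟨?_, ?_⟩, ?_⟩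
    · rw [map_smul, (hg c hc).1, smul_comm]
    · intro hne
      refine (hg c hc).2 fun hz => hne ?_
      show a • g c = 0
      rw [hz, smul_zero]
    · rw [Finset.smul_sum]

lemma sum_shift (s s' : Finset ℝ) (t : ℝ) (hsub : ∀ c ∈ s, c + t ∈ s') (F : ℝ → D)
    [∀ c, Decidable (c ∈ s)] :
    ∑ d ∈ s', (if d - t ∈ s then F (d - t) else 0) = ∑ c ∈ s, F c := by
  classical
  have himg : s.image (· + t) ⊆ s' := by
    intro d hd
    obtain ⟨c, hc, rfl⟩ := Finset.mem_image.1 hd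
    exact hsub c hc
  rw [← Finset.sum_subset himg (fun d _ hnd => ?_)]
  · rw [Finset.sum_image (fun x _ y _ hxy => by linarith [hxy] : ∀ x ∈ s, ∀ y ∈ s, x + t = y + t → x = y)]
    refine Finset.sum_congr rfl fun c hc => ?_
    rw [if_pos (by simpa using hc)]
    congr 1 <;> ring
  · rw [if_neg]
    intro hmem
    exact hnd (Finset.mem_image.2 ⟨d - t, hmem, by ring⟩)
end decomp

section norms
variable (h ep em : Module.End ℂ D)
variable (heig : ∀ μ : ℂ, Module.End.HasEigenvalue h μ → ∃ c : ℝ, 0 ≤ c ∧ μ = (c : ℂ))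
variable (hadj : ∀ u v : D, (inner ℂ (ep u) v : ℂ) = inner ℂ u (em v))
variable (hc1 : ⁅h, ep⁆ = ep) (hc2 : ⁅h, em⁆ = -em) (hc3 : ⁅em, ep⁆ = (2 : ℂ) • h)

include hadj hc1 hc2 hc3 in
lemma sum_norm_eqs {s : Finset ℝ} {g : ℝ → D}
    (hg : ∀ c ∈ s, h (g c) = (c:ℂ) • g c) :
    ‖∑ c ∈ s, g c‖^2 = ∑ c ∈ s, ‖g c‖^2 ∧
    ‖h (∑ c ∈ s, g c)‖^2 = ∑ c ∈ s, ‖(c:ℂ) • g c‖^2 ∧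
    ‖em (∑ c ∈ s, g c)‖^2 = ∑ c ∈ s, ‖em (g c)‖^2 ∧
    ‖ep (∑ c ∈ s, g c)‖^2 = ∑ c ∈ s, ‖ep (g c)‖^2 ∧
    ‖(∑ c ∈ s, g c) + h (∑ c ∈ s, g c)‖^2 = ∑ c ∈ s, ‖((1+c:ℝ):ℂ) • g c‖^2 := by
  have hsum : h (∑ c ∈ s, g c) = ∑ c ∈ s, (c:ℂ) • g c := by
    rw [map_sum]; exact Finset.sum_congr rfl fun c hc => hg c hc
  have emsum : em (∑ c ∈ s, g c) = ∑ c ∈ s, em (g c) := map_sum em g s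
  have epsum : ep (∑ c ∈ s, g c) = ∑ c ∈ s, ep (g c) := map_sum ep g s
  have vsum : (∑ c ∈ s, g c) + h (∑ c ∈ s, g c) = ∑ c ∈ s, ((1+c:ℝ):ℂ) • g c := by
    rw [hsum, ← Finset.sum_add_distrib]
    refine Finset.sum_congr rfl fun c hc => ?_
    push_cast
    rw [add_smul, one_smul]
  refine ⟨?_, ?_, ?_, ?_, ?_⟩
  · exact normsq_sum h ep em hadj hc3 s _ (fun c => c) (Function.injective_id.injOn)
      (fun c hc => hg c hc)
  · rw [hsum]
    exact normsq_sum h ep em hadj hc3 s _ (fun c => c) (Function.injective_id.injOn)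
      (fun c hc => by rw [map_smul, hg c hc])
  · rw [emsum]
    exact normsq_sum h ep em hadj hc3 s _ (fun c => c - 1) (sub_left_injective.injOn)
      (fun c hc => eig_em h em hc2 (hg c hc))
  · rw [epsum]
    exact normsq_sum h ep em hadj hc3 s _ (fun c => c + 1) ((add_left_injective 1).injOn)
      (fun c hc => eig_ep h ep hc1 (hg c hc))
  · rw [vsum]
    exact normsq_sum h ep em hadj hc3 s _ (fun c => c) (Function.injective_id.injOn)
      (fun c hc => by rw [map_smul, hg c hc, smul_comm])

include heig hadj hc1 hc2 hc3 in
lemma rep_norms {s : Finset ℝ} {g : ℝ → D}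
    (hg : ∀ c ∈ s, h (g c) = (c:ℂ) • g c ∧ (g c ≠ 0 → 0 ≤ c)) :
    ‖em (∑ c ∈ s, g c)‖ ≤ ‖h (∑ c ∈ s, g c)‖ ∧
    ‖ep (∑ c ∈ s, g c)‖ ≤ ‖(∑ c ∈ s, g c) + h (∑ c ∈ s, g c)‖ := by
  obtain ⟨n0, nh, nem, nep, nv⟩ := sum_norm_eqs h ep em hadj hc1 hc2 hc3
    (fun c hc => (hg c hc).1)
  constructor
  · refine le_of_sq_le_sq (norm_nonneg _) (norm_nonneg _) ?_
    rw [nem, nh]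
    refine Finset.sum_le_sum fun c hc => ?_
    rcases eq_or_ne (g c) 0 with hz | hz
    · simp [hz]
    have hc0 : 0 ≤ c := (hg c hc).2 hz
    have hb : ‖em (g c)‖ ≤ c * ‖g c‖ := lemEm h ep em heig hadj hc2 hc3 (hg c hc).1
    have hnc : ‖(c:ℂ) • g c‖ = c * ‖g c‖ := by
      rw [norm_smul, Complex.norm_real, Real.norm_eq_abs, abs_of_nonneg hc0]
    rw [hnc]
    exact pow_le_pow_left₀ (norm_nonneg _) hb 2
  · refine le_of_sq_le_sq (norm_nonneg _) (norm_nonneg _) ?_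
    rw [nep, nv]
    refine Finset.sum_le_sum fun c hc => ?_
    rcases eq_or_ne (g c) 0 with hz | hz
    · simp [hz]
    have hc0 : 0 ≤ c := (hg c hc).2 hz
    have hb : ‖ep (g c)‖ ≤ (1 + c) * ‖g c‖ :=
      lemEp h ep em heig hadj hc1 hc2 hc3 (hg c hc).1
    have hnc : ‖((1+c:ℝ):ℂ) • g c‖ = (1 + c) * ‖g c‖ := by
      rw [norm_smul, Complex.norm_real, Real.norm_eq_abs, abs_of_nonneg (by linarith)]
    rw [hnc]
    exact pow_le_pow_left₀ (norm_nonneg _) hb 2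

include heig hadj hc1 hc2 hc3 in
lemma rep_norms_bdd {s : Finset ℝ} {g : ℝ → D} {m : ℝ} (hm : 0 ≤ m)
    (hg : ∀ c ∈ s, h (g c) = (c:ℂ) • g c ∧ (g c ≠ 0 → 0 ≤ c ∧ c ≤ m)) :
    ‖h (∑ c ∈ s, g c)‖ ≤ m * ‖∑ c ∈ s, g c‖ ∧
    ‖em (∑ c ∈ s, g c)‖ ≤ m * ‖∑ c ∈ s, g c‖ ∧
    ‖ep (∑ c ∈ s, g c)‖ ≤ (m + 1) * ‖∑ c ∈ s, g c‖ := by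
  obtain ⟨n0, nh, nem, nep, nv⟩ := sum_norm_eqs h ep em hadj hc1 hc2 hc3
    (fun c hc => (hg c hc).1)
  have key : ∀ c ∈ s, ‖(c:ℂ) • g c‖^2 ≤ m^2 * ‖g c‖^2 := by
    intro c hc
    rcases eq_or_ne (g c) 0 with hz | hz
    · simp [hz]
    obtain ⟨hc0, hcm⟩ := (hg c hc).2 hz
    rw [norm_smul, Complex.norm_real, Real.norm_eq_abs, abs_of_nonneg hc0, mul_pow]
    have : c^2 ≤ m^2 := pow_le_pow_left₀ hc0 hcm 2
    nlinarith [sq_nonneg (‖g c‖)]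
  have hhv : ‖h (∑ c ∈ s, g c)‖ ≤ m * ‖∑ c ∈ s, g c‖ := by
    refine le_of_sq_le_sq (norm_nonneg _) (by positivity) ?_
    rw [nh, mul_pow, n0, Finset.mul_sum]
    exact Finset.sum_le_sum key
  refine ⟨hhv, ?_, ?_⟩
  · refine le_of_sq_le_sq (norm_nonneg _) (by positivity) ?_
    rw [nem, mul_pow, n0, Finset.mul_sum]
    refine Finset.sum_le_sum fun c hc => ?_
    rcases eq_or_ne (g c) 0 with hz | hz
    · simp [hz]
    obtain ⟨hc0, hcm⟩ := (hg c hc).2 hz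
    have hb : ‖em (g c)‖ ≤ c * ‖g c‖ := lemEm h ep em heig hadj hc2 hc3 (hg c hc).1
    have hb2 : ‖em (g c)‖ ≤ m * ‖g c‖ :=
      hb.trans (mul_le_mul_of_nonneg_right hcm (norm_nonneg _))
    calc ‖em (g c)‖^2 ≤ (m * ‖g c‖)^2 := pow_le_pow_left₀ (norm_nonneg _) hb2 2
      _ = m^2 * ‖g c‖^2 := by ring
  · refine le_of_sq_le_sq (norm_nonneg _) (by positivity) ?_
    rw [nep, mul_pow, n0, Finset.mul_sum]
    refine Finset.sum_le_sum fun c hc => ?_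
    rcases eq_or_ne (g c) 0 with hz | hz
    · simp [hz]
    obtain ⟨hc0, hcm⟩ := (hg c hc).2 hz
    have hb : ‖ep (g c)‖ ≤ (1 + c) * ‖g c‖ :=
      lemEp h ep em heig hadj hc1 hc2 hc3 (hg c hc).1
    have hb2 : ‖ep (g c)‖ ≤ (m + 1) * ‖g c‖ :=
      hb.trans (mul_le_mul_of_nonneg_right (by linarith) (norm_nonneg _))
    calc ‖ep (g c)‖^2 ≤ ((m+1) * ‖g c‖)^2 := pow_le_pow_left₀ (norm_nonneg _) hb2 2
      _ = (m+1)^2 * ‖g c‖^2 := by ring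
end norms

section step
variable (h ep em : Module.End ℂ D)
variable (heig : ∀ μ : ℂ, Module.End.HasEigenvalue h μ → ∃ c : ℝ, 0 ≤ c ∧ μ = (c : ℂ))
variable (hadj : ∀ u v : D, (inner ℂ (ep u) v : ℂ) = inner ℂ u (em v))
variable (hc1 : ⁅h, ep⁆ = ep) (hc2 : ⁅h, em⁆ = -em) (hc3 : ⁅em, ep⁆ = (2 : ℂ) • h)

include heig hadj hc1 hc2 hc3 in
lemma step (a b cc : ℂ) {m : ℝ} (hm : 0 ≤ m) {v : D}
    (hrep : ∃ (s : Finset ℝ) (g : ℝ → D),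
      (∀ c ∈ s, h (g c) = (c:ℂ) • g c ∧ (g c ≠ 0 → 0 ≤ c ∧ c ≤ m)) ∧ v = ∑ c ∈ s, g c) :
    (∃ (s' : Finset ℝ) (G : ℝ → D),
      (∀ c ∈ s', h (G c) = (c:ℂ) • G c ∧ (G c ≠ 0 → 0 ≤ c ∧ c ≤ m + 1)) ∧
      (a • h + b • ep + cc • em) v = ∑ c ∈ s', G c) ∧
    ‖(a • h + b • ep + cc • em) v‖ ≤ (‖a‖ + ‖b‖ + ‖cc‖) * (m + 1) * ‖v‖ := by
  classical
  obtain ⟨s, g, hg, rfl⟩ := hrep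
  have hqv : (a • h + b • ep + cc • em) (∑ c ∈ s, g c)
      = a • h (∑ c ∈ s, g c) + b • ep (∑ c ∈ s, g c) + cc • em (∑ c ∈ s, g c) := by
    simp only [LinearMap.add_apply, LinearMap.smul_apply]
  obtain ⟨b1, b2, b3⟩ := rep_norms_bdd h ep em heig hadj hc1 hc2 hc3 hm hg
  constructor
  · -- representation of q v
    set s' : Finset ℝ := (s.image (· + (0:ℝ)) ∪ s.image (· + 1)) ∪ s.image (· + (-1)) with hs'
    set G : ℝ → D := fun d =>
        a • (if d - (0:ℝ) ∈ s then ((d - (0:ℝ) : ℝ):ℂ) • g (d - 0) else 0)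
      + b • (if d - (1:ℝ) ∈ s then ep (g (d - 1)) else 0)
      + cc • (if d - (-1:ℝ) ∈ s then em (g (d - (-1))) else 0) with hG
    have comp1 : ∀ d : ℝ, h (if d - (0:ℝ) ∈ s then ((d - (0:ℝ) : ℝ):ℂ) • g (d - 0) else 0)
        = (d:ℂ) • (if d - (0:ℝ) ∈ s then ((d - (0:ℝ) : ℝ):ℂ) • g (d - 0) else 0) := by
      intro d
      simp only [sub_zero]
      split_ifs with h1
      · rw [map_smul, (hg d h1).1]
      · simp
    have comp2 : ∀ d : ℝ, h (if d - (1:ℝ) ∈ s then ep (g (d - 1)) else 0)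
        = (d:ℂ) • (if d - (1:ℝ) ∈ s then ep (g (d - 1)) else 0) := by
      intro d
      split_ifs with h1
      · have := eig_ep h ep hc1 (hg _ h1).1
        rwa [show ((d - 1 + 1 : ℝ):ℂ) = ((d:ℝ):ℂ) by norm_num] at this
      · simp
    have comp3 : ∀ d : ℝ, h (if d - (-1:ℝ) ∈ s then em (g (d - (-1))) else 0)
        = (d:ℂ) • (if d - (-1:ℝ) ∈ s then em (g (d - (-1))) else 0) := by
      intro d
      split_ifs with h1
      · have := eig_em h em hc2 (hg _ h1).1
        rwa [show ((d - (-1) - 1 : ℝ):ℂ) = ((d:ℝ):ℂ) by norm_num] at this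
      · simp
    have hGeig : ∀ d : ℝ, h (G d) = (d:ℂ) • G d := by
      intro d
      rw [hG]
      simp only []
      rw [map_add, map_add, map_smul, map_smul, map_smul, comp1 d, comp2 d, comp3 d,
        smul_add, smul_add, smul_comm a, smul_comm b, smul_comm cc]
    refine ⟨s', G, fun d hd => ⟨hGeig d, fun hne => ⟨eig_nonneg h heig (hGeig d) hne, ?_⟩⟩, ?_⟩
    · by_contra hgt
      push_neg at hgt
      apply hne
      have z1 : (if d - (0:ℝ) ∈ s then ((d - (0:ℝ) : ℝ):ℂ) • g (d - 0) else 0) = 0 := by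
        simp only [sub_zero]
        split_ifs with h1
        · rcases eq_or_ne (g d) 0 with hz | hz
          · rw [hz, smul_zero]
          · exact absurd ((hg d h1).2 hz).2 (by linarith)
        · rfl
      have z2 : (if d - (1:ℝ) ∈ s then ep (g (d - 1)) else 0) = 0 := by
        split_ifs with h1
        · rcases eq_or_ne (g (d-1)) 0 with hz | hz
          · rw [hz, map_zero]
          · exact absurd ((hg _ h1).2 hz).2 (by linarith)
        · rfl
      have z3 : (if d - (-1:ℝ) ∈ s then em (g (d - (-1))) else 0) = 0 := by
        split_ifs with h1
        · rcases eq_or_ne (g (d - (-1))) 0 with hz | hz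
          · rw [hz, map_zero]
          · exact absurd ((hg _ h1).2 hz).2 (by linarith)
        · rfl
      show a • _ + b • _ + cc • _ = 0
      rw [z1, z2, z3, smul_zero, smul_zero, smul_zero, add_zero, add_zero]
    · -- the sum
      have hsub0 : ∀ c ∈ s, c + (0:ℝ) ∈ s' := fun c hc => by
        rw [hs']
        exact Finset.mem_union_left _ (Finset.mem_union_left _
          (Finset.mem_image.2 ⟨c, hc, rfl⟩))
      have hsub1 : ∀ c ∈ s, c + (1:ℝ) ∈ s' := fun c hc => by
        rw [hs']
        exact Finset.mem_union_left _ (Finset.mem_union_right _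
          (Finset.mem_image.2 ⟨c, hc, rfl⟩))
      have hsub2 : ∀ c ∈ s, c + (-1:ℝ) ∈ s' := fun c hc => by
        rw [hs']
        exact Finset.mem_union_right _ (Finset.mem_image.2 ⟨c, hc, rfl⟩)
      have S1 := sum_shift (D := D) s s' 0 hsub0 (fun c => ((c : ℝ):ℂ) • g c)
      have S2 := sum_shift (D := D) s s' 1 hsub1 (fun c => ep (g c))
      have S3 := sum_shift (D := D) s s' (-1) hsub2 (fun c => em (g c))
      have hsum : h (∑ c ∈ s, g c) = ∑ c ∈ s, ((c:ℝ):ℂ) • g c := by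
        rw [map_sum]; exact Finset.sum_congr rfl fun c hc => (hg c hc).1
      rw [hqv, hG]
      rw [Finset.sum_add_distrib, Finset.sum_add_distrib, ← Finset.smul_sum,
        ← Finset.smul_sum, ← Finset.smul_sum, S1, S2, S3, ← hsum, ← map_sum, ← map_sum]
  · -- norm bound
    rw [hqv]
    have t1 : ‖a • h (∑ c ∈ s, g c) + b • ep (∑ c ∈ s, g c) + cc • em (∑ c ∈ s, g c)‖
        ≤ ‖a‖ * ‖h (∑ c ∈ s, g c)‖ + ‖b‖ * ‖ep (∑ c ∈ s, g c)‖
          + ‖cc‖ * ‖em (∑ c ∈ s, g c)‖ := by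
      calc ‖a • h (∑ c ∈ s, g c) + b • ep (∑ c ∈ s, g c) + cc • em (∑ c ∈ s, g c)‖
          ≤ ‖a • h (∑ c ∈ s, g c) + b • ep (∑ c ∈ s, g c)‖ + ‖cc • em (∑ c ∈ s, g c)‖ :=
            norm_add_le _ _
        _ ≤ ‖a • h (∑ c ∈ s, g c)‖ + ‖b • ep (∑ c ∈ s, g c)‖ + ‖cc • em (∑ c ∈ s, g c)‖ := by
            have := norm_add_le (a • h (∑ c ∈ s, g c)) (b • ep (∑ c ∈ s, g c))
            linarith
        _ = ‖a‖ * ‖h (∑ c ∈ s, g c)‖ + ‖b‖ * ‖ep (∑ c ∈ s, g c)‖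
            + ‖cc‖ * ‖em (∑ c ∈ s, g c)‖ := by rw [norm_smul, norm_smul, norm_smul]
    have ha0 : (0:ℝ) ≤ ‖a‖ := norm_nonneg a
    have hb0 : (0:ℝ) ≤ ‖b‖ := norm_nonneg b
    have hcc0 : (0:ℝ) ≤ ‖cc‖ := norm_nonneg cc
    have hv0 : (0:ℝ) ≤ ‖∑ c ∈ s, g c‖ := norm_nonneg _
    have ta := mul_le_mul_of_nonneg_left b1 ha0
    have tb := mul_le_mul_of_nonneg_left b3 hb0
    have tc := mul_le_mul_of_nonneg_left b2 hcc0
    nlinarith [mul_nonneg ha0 hv0, mul_nonneg hcc0 hv0, mul_nonneg hb0 hv0]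
end step

lemma prod_fac (m : ℕ) : ∀ n : ℕ,
    (∏ k ∈ Finset.range n, (m + k + 1)) * m.factorial = (m + n).factorial := by
  intro n
  induction n with
  | zero => simp
  | succ n ih =>
    rw [Finset.prod_range_succ, mul_right_comm, ih, show m + (n+1) = (m+n) + 1 from rfl,
      Nat.factorial_succ]
    ring

lemma prod_le_two_pow_mul_fac (m : ℕ) (n : ℕ) :
    (∏ k ∈ Finset.range n, (m + k + 1)) ≤ 2^(m+n) * n.factorial := by
  have h1 : (∏ k ∈ Finset.range n, (m + k + 1)) = (m+n).choose n * n.factorial := by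
    have h2 := Nat.choose_mul_factorial_mul_factorial (Nat.le_add_left n m)
    rw [Nat.add_sub_cancel] at h2
    have h3 : (∏ k ∈ Finset.range n, (m + k + 1)) * m.factorial
        = ((m+n).choose n * n.factorial) * m.factorial := by
      rw [prod_fac, ← h2]
    exact Nat.eq_of_mul_eq_mul_right m.factorial_pos h3
  rw [h1]
  have h4 : (m+n).choose n ≤ 2^(m+n) := by
    calc (m+n).choose n ≤ ∑ i ∈ Finset.range (m+n+1), (m+n).choose i :=
          Finset.single_le_sum (fun i _ => Nat.zero_le _)
            (Finset.mem_range.2 (by omega))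
      _ = 2^(m+n) := Nat.sum_range_choose (m+n)
  exact Nat.mul_le_mul_right _ h4

end SL2Aux


/-- Energy bounds and analyticity of vectors for a positive energy unitary
representation `(h, e₊, e₋)` of `sl(2,ℝ)` on an inner product space `D`
(here `ep` is `e₊` and `em` is `e₋`). -/
theorem sl2_energy_bounds_and_analytic_vectors
    {D : Type*} [NormedAddCommGroup D] [InnerProductSpace ℂ D]
    (h ep em : Module.End ℂ D)
    (hspan : Submodule.span ℂ {v : D | ∃ μ : ℂ, h v = μ • v} = ⊤)
    (heig : ∀ μ : ℂ, Module.End.HasEigenvalue h μ → ∃ c : ℝ, 0 ≤ c ∧ μ = (c : ℂ))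
    (hadj : ∀ u v : D, (inner ℂ (ep u) v : ℂ) = inner ℂ u (em v))
    (hc1 : ⁅h, ep⁆ = ep) (hc2 : ⁅h, em⁆ = -em) (hc3 : ⁅em, ep⁆ = (2 : ℂ) • h) :
    (∀ Ψ : D, ‖em Ψ‖ ≤ ‖h Ψ‖ ∧ ‖ep Ψ‖ ≤ ‖Ψ + h Ψ‖) ∧
      ∀ a b c : ℂ, ∃ t : ℝ, 0 < t ∧ ∀ Ψ : D,
        Summable (fun n : ℕ =>
          t ^ n * ‖((a • h + b • ep + c • em) ^ n) Ψ‖ / (n.factorial : ℝ)) := by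
  constructor
  · intro Ψ
    obtain ⟨s, g, hg, hΨ⟩ := SL2Aux.rep_top h heig hspan Ψ
    rw [hΨ]
    exact SL2Aux.rep_norms h ep em heig hadj hc1 hc2 hc3 hg
  · intro a b c
    obtain ⟨M, hMdef, hM0⟩ : ∃ M : ℝ, M = ‖a‖ + ‖b‖ + ‖c‖ ∧ 0 ≤ M :=
      ⟨_, rfl, by positivity⟩
    obtain ⟨t, htdef, ht0⟩ : ∃ t : ℝ, t = 1/(2*M+2) ∧ 0 < t :=
      ⟨_, rfl, by positivity⟩
    refine ⟨t, ht0, ?_⟩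
    intro Ψ
    set q : Module.End ℂ D := a • h + b • ep + c • em with hqdef
    obtain ⟨s, g, hg, hΨ⟩ := SL2Aux.rep_top h heig hspan Ψ
    set m : ℕ := s.sup fun c => ⌈c⌉₊ with hmdef
    have hrep0 : ∃ (s' : Finset ℝ) (g' : ℝ → D),
        (∀ d ∈ s', h (g' d) = (d:ℂ) • g' d ∧ (g' d ≠ 0 → 0 ≤ d ∧ d ≤ (m:ℝ))) ∧
        Ψ = ∑ d ∈ s', g' d := by
      refine ⟨s, g, fun d hd => ⟨(hg d hd).1, fun hne => ⟨(hg d hd).2 hne, ?_⟩⟩, hΨ⟩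
      calc d ≤ (⌈d⌉₊ : ℝ) := Nat.le_ceil d
        _ ≤ (m:ℝ) := by exact_mod_cast Finset.le_sup hd
    have key : ∀ n : ℕ, (∃ (s' : Finset ℝ) (g' : ℝ → D),
        (∀ d ∈ s', h (g' d) = (d:ℂ) • g' d ∧ (g' d ≠ 0 → 0 ≤ d ∧ d ≤ (m:ℝ) + n)) ∧
        (q^n) Ψ = ∑ d ∈ s', g' d) ∧
        ‖(q^n) Ψ‖ ≤ M^n * ((∏ k ∈ Finset.range n, (m + k + 1) : ℕ) : ℝ) * ‖Ψ‖ := by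
      intro n
      induction n with
      | zero =>
        constructor
        · simpa using hrep0
        · simp
      | succ n ih =>
        obtain ⟨hrep, hbnd⟩ := ih
        have hmn : (0:ℝ) ≤ (m:ℝ) + n := by positivity
        have hstep := SL2Aux.step h ep em heig hadj hc1 hc2 hc3 a b c hmn hrep
        have happ : (q^(n+1)) Ψ = q ((q^n) Ψ) := by
          rw [pow_succ', Module.End.mul_apply]
        constructor
        · obtain ⟨s', G, hG, hsum⟩ := hstep.1
          refine ⟨s', G, fun d hd => ⟨(hG d hd).1, fun hne => ⟨((hG d hd).2 hne).1, ?_⟩⟩, ?_⟩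
          · have := ((hG d hd).2 hne).2
            push_cast
            linarith
          · rw [happ, ← hqdef] at *
            exact hsum
        · have h2 := hstep.2
          rw [← hqdef, ← hMdef] at h2
          calc ‖(q^(n+1)) Ψ‖ = ‖q ((q^n) Ψ)‖ := by rw [happ]
            _ ≤ M * (((m:ℝ) + n) + 1) * ‖(q^n) Ψ‖ := h2
            _ ≤ M * (((m:ℝ) + n) + 1) *
                (M^n * ((∏ k ∈ Finset.range n, (m + k + 1) : ℕ) : ℝ) * ‖Ψ‖) := by
                refine mul_le_mul_of_nonneg_left hbnd ?_
                positivity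
            _ = M^(n+1) * ((∏ k ∈ Finset.range (n+1), (m + k + 1) : ℕ) : ℝ) * ‖Ψ‖ := by
                rw [Finset.prod_range_succ]
                push_cast
                ring
    -- summability
    have hr0 : (0:ℝ) ≤ 2*t*M := by positivity
    have hr1 : 2*t*M < 1 := by
      rw [htdef, show 2*(1/(2*M+2))*M = 2*M/(2*M+2) by ring, div_lt_one (by positivity)]
      linarith
    have hsummable : Summable (fun n : ℕ => (2^m * ‖Ψ‖) * (2*t*M)^n) :=
      (summable_geometric_of_lt_one hr0 hr1).mul_left _
    refine Summable.of_nonneg_of_le (fun n => by positivity) (fun n => ?_) hsummable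
    have hfacpos : (0:ℝ) < (n.factorial : ℝ) := by exact_mod_cast n.factorial_pos
    rw [div_le_iff₀ hfacpos]
    have hb1 : ‖(q^n) Ψ‖ ≤ M^n * ((∏ k ∈ Finset.range n, (m + k + 1) : ℕ) : ℝ) * ‖Ψ‖ :=
      (key n).2
    have hb2 : ((∏ k ∈ Finset.range n, (m + k + 1) : ℕ) : ℝ)
        ≤ ((2^(m+n) * n.factorial : ℕ) : ℝ) :=
      Nat.cast_le.2 (SL2Aux.prod_le_two_pow_mul_fac m n)
    calc t^n * ‖(q^n) Ψ‖
        ≤ t^n * (M^n * ((∏ k ∈ Finset.range n, (m + k + 1) : ℕ) : ℝ) * ‖Ψ‖) := by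
          refine mul_le_mul_of_nonneg_left hb1 (by positivity)
      _ ≤ t^n * (M^n * ((2^(m+n) * n.factorial : ℕ) : ℝ) * ‖Ψ‖) := by
          refine mul_le_mul_of_nonneg_left ?_ (by positivity)
          refine mul_le_mul_of_nonneg_right (mul_le_mul_of_nonneg_left hb2 (by positivity))
            (norm_nonneg _)
      _ = 2^m * ‖Ψ‖ * (2*t*M)^n * (n.factorial : ℝ) := by
          push_cast
          ring
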